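/- Consider the system dξ/dτ = −ξ + θ + 2ξθ − θ² − ξ³ + ξ²θ, dθ/dτ = 1 − 3θ + ξ² + 2θ² − ξ²θ + ξθ², and let F(ξ,θ) = ((ξ² + (θ − 1)²)/(2θ − 1 − ξ²))·exp(2·arctan(ξ/(θ − 1))) on the set G = {(ξ,θ) : θ ≠ 1 and 1 − 2θ + ξ² ≠ 0}. Then F is differentiable on G and (−ξ + θ + 2ξθ − θ² − ξ³ + ξ²θ)·∂F/∂ξ(ξ,θ) + (1 − 3θ + ξ² + 2θ² − ξ²θ + ξθ²)·∂F/∂θ(ξ,θ) = 0 for all (ξ,θ) ∈ G; that is, F is a general autonomous integral of the system on any domain contained in G. -/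

import Mathlib

/-- `F(ξ,θ) = ((ξ² + (θ − 1)²)/(2θ − 1 − ξ²))·exp(2·arctan(ξ/(θ − 1)))`. -/
noncomputable def F11 : ℝ × ℝ → ℝ :=
  fun p => ((p.1 ^ 2 + (p.2 - 1) ^ 2) / (2 * p.2 - 1 - p.1 ^ 2)) *
    Real.exp (2 * Real.arctan (p.1 / (p.2 - 1)))

/-- `F` is a general autonomous integral of the system
`dξ/dτ = −ξ + θ + 2ξθ − θ² − ξ³ + ξ²θ`,
`dθ/dτ = 1 − 3θ + ξ² + 2θ² − ξ²θ + ξθ²` on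
`G = {(ξ,θ) : θ ≠ 1 ∧ 1 − 2θ + ξ² ≠ 0}`. -/
theorem F11_general_autonomous_integral :
    ∀ p : ℝ × ℝ, p.2 ≠ 1 → 1 - 2 * p.2 + p.1 ^ 2 ≠ 0 →
      DifferentiableAt ℝ F11 p ∧
      (-p.1 + p.2 + 2 * p.1 * p.2 - p.2 ^ 2 - p.1 ^ 3 + p.1 ^ 2 * p.2) *
          fderiv ℝ F11 p (1, 0) +
        (1 - 3 * p.2 + p.1 ^ 2 + 2 * p.2 ^ 2 - p.1 ^ 2 * p.2 + p.1 * p.2 ^ 2) *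
          fderiv ℝ F11 p (0, 1) = 0 := by
  intro p hv1 hDne
  have hv : p.2 - 1 ≠ 0 := sub_ne_zero.mpr hv1
  have hD : 2 * p.2 - 1 - p.1 ^ 2 ≠ 0 := by
    intro h; apply hDne; linarith
  have hN : (p.1 ^ 2 + (p.2 - 1) ^ 2) ≠ 0 := by
    have : (0:ℝ) < p.1 ^ 2 + (p.2 - 1) ^ 2 := by positivity
    linarith
  have hD' : 2 * p.2 - 1 - p.1 * p.1 ≠ 0 := by
    intro h; apply hDne; nlinarith
  have hF11 : F11 = fun q : ℝ × ℝ =>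
      (q.1 * q.1 + (q.2 - 1) * (q.2 - 1)) * (2 * q.2 - 1 - q.1 * q.1)⁻¹ *
        Real.exp (2 * Real.arctan (q.1 * (q.2 - 1)⁻¹)) := by
    funext q; simp [F11, div_eq_mul_inv, pow_two]
  have hsub : HasFDerivAt (fun q : ℝ × ℝ => q.2 - 1) _ p :=
    (hasFDerivAt_snd (𝕜 := ℝ)).sub_const 1
  have hinv1 := (hasDerivAt_inv hv).comp_hasFDerivAt p hsub
  have ht := (hasFDerivAt_fst (𝕜 := ℝ)).mul hinv1
  have hA := (Real.hasDerivAt_arctan (p.1 * (p.2 - 1)⁻¹)).comp_hasFDerivAt p ht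
  have hE := (hA.const_mul (2:ℝ)).exp
  have hmf : HasFDerivAt (fun q : ℝ × ℝ => q.1 * q.1) _ p :=
    (hasFDerivAt_fst (𝕜 := ℝ)).mul (hasFDerivAt_fst (𝕜 := ℝ))
  have hNum : HasFDerivAt (fun q : ℝ × ℝ => q.1 * q.1 + (q.2 - 1) * (q.2 - 1)) _ p :=
    hmf.add (hsub.mul hsub)
  have hDen : HasFDerivAt (fun q : ℝ × ℝ => 2 * q.2 - 1 - q.1 * q.1) _ p :=
    (((hasFDerivAt_snd).const_mul 2).sub_const 1).sub hmf
  have hinvD := (hasDerivAt_inv hD').comp_hasFDerivAt p hDen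
  have hQ := hNum.mul hinvD
  have hF : HasFDerivAt F11 _ p :=
    (hQ.mul hE).congr_of_eventuallyEq (Filter.Eventually.of_forall (fun q => congrFun hF11 q))
  have h1p : (1 : ℝ) + (p.1 * (p.2 - 1)⁻¹) ^ 2 ≠ 0 := by positivity
  refine ⟨hF.differentiableAt, ?_⟩
  rw [hF.fderiv]
  simp only [ContinuousLinearMap.add_apply, ContinuousLinearMap.smul_apply,
    ContinuousLinearMap.sub_apply, ContinuousLinearMap.coe_fst',
    ContinuousLinearMap.coe_snd', ContinuousLinearMap.coe_comp', Function.comp_apply,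
    ContinuousLinearMap.smulRight_apply, ContinuousLinearMap.one_apply, smul_eq_mul, Pi.mul_apply]
  set e := Real.exp (2 * Real.arctan (p.1 * (p.2 - 1)⁻¹))
  field_simp
  ring
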